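/- Let (F ∪ W, ⊐, h, ≻) be a matching game induced by a stable matching rule h on a many-to-many matching market in which every agent's preference is substitutable and satisfies the law of aggregate demand (LAD). Then an agent a ∈ F ∪ W satisfies the manipulability property with Blair order if and only if a satisfies the manipulability property. -/

import Mathlib

/-!
Common framework for many-to-many matching markets (Manasero–Oviedo,
"General Manipulability Theorem for a Matching Model").

Agents on each side have strict linear orders (strict total orders) over
finsets of the other side.  `Pref.Ch` is the choice function, selecting the
most preferred subset.
-/

/-- A strict preference of an agent over subsets of the (finite) set `α` of
potential partners: a strict total order on `Finset α`, where `gt S T` means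
`S` is strictly preferred to `T`. -/
structure Pref (α : Type*) [DecidableEq α] [Fintype α] where
  gt : Finset α → Finset α → Prop
  isSTO : IsStrictTotalOrder (Finset α) gt

namespace Pref

variable {α : Type*} [DecidableEq α] [Fintype α]

/-- The choice set `Ch(S, ≻)`: the `≻`-maximal subset of `S`. -/
noncomputable def Ch (p : Pref α) (S : Finset α) : Finset α := by
  classical
  haveI := p.isSTO
  haveI : IsStrictTotalOrder (Finset α) (Function.swap p.gt) := IsStrictTotalOrder.swap _
  exact @Finset.max' _ (linearOrderOfSTO (Function.swap p.gt)) S.powerset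
    ⟨∅, Finset.empty_mem_powerset S⟩

/-- Substitutability: if `w ∈ Ch(S)` then `w ∈ Ch(S \ {w'})` for any other `w' ∈ S`. -/
def Substitutable (p : Pref α) : Prop :=
  ∀ (S : Finset α) (w w' : α), w ∈ S → w' ∈ S → w ≠ w' →
    w ∈ p.Ch S → w ∈ p.Ch (S.erase w')

/-- Law of aggregate demand: `Y ⊆ X` implies `|Ch(Y)| ≤ |Ch(X)|`. -/
def LAD (p : Pref α) : Prop :=
  ∀ Y X : Finset α, Y ⊆ X → (p.Ch Y).card ≤ (p.Ch X).card

/-- `p.HasList L` : the sets in `L` are exactly the acceptable sets, in strictly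
decreasing order of preference and all preferred to `∅`; any set not in the
list (other than `∅`) is unacceptable, i.e. worse than `∅`. -/
def HasList (p : Pref α) (L : List (Finset α)) : Prop :=
  List.Chain' p.gt (L ++ [∅]) ∧ ∀ S : Finset α, S ∉ L → S ≠ ∅ → p.gt ∅ S

/-- `q`-separability of a preference with quota `q`. -/
def QSeparable (p : Pref α) (q : ℕ) : Prop :=
  (∀ S : Finset α, q < S.card → p.gt ∅ S) ∧
  (∀ (S : Finset α) (v : α), v ∉ S → S.card < q → (p.gt (insert v S) S ↔ p.gt {v} ∅))

end Pref

/-- `p'` is the restriction `p |_T` of `p` to `T`: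
(i) any set not contained in `T` is worse than `∅`;
(ii) for `S ⊆ T`, `S ≻' ∅ ↔ S ≻ ∅`;
(iii) for `S, S' ⊆ T`, `S ≻' S' ↔ S ≻ S'`. -/
def IsRestriction {α : Type*} [DecidableEq α] [Fintype α]
    (p : Pref α) (T : Finset α) (p' : Pref α) : Prop :=
  (∀ S : Finset α, ¬ S ⊆ T → p'.gt ∅ S) ∧
  (∀ S : Finset α, S ⊆ T → (p'.gt S ∅ ↔ p.gt S ∅)) ∧
  (∀ S S' : Finset α, S ⊆ T → S' ⊆ T → (p'.gt S S' ↔ p.gt S S'))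

variable (F W : Type*) [DecidableEq F] [Fintype F] [DecidableEq W] [Fintype W]

/-- A (many-to-many) matching between firms `F` and workers `W`. -/
structure Matching where
  fm : F → Finset W
  wm : W → Finset F
  compat : ∀ f w, w ∈ fm f ↔ f ∈ wm w

/-- A preference profile: one preference for each firm and each worker. -/
structure Profile where
  fp : F → Pref W
  wp : W → Pref F

variable {F W}

/-- All agents' preferences are substitutable. -/
def Profile.Substitutable (P : Profile F W) : Prop :=
  (∀ f, (P.fp f).Substitutable) ∧ (∀ w, (P.wp w).Substitutable)

/-- All agents' preferences satisfy the law of aggregate demand. -/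
def Profile.LAD (P : Profile F W) : Prop :=
  (∀ f, (P.fp f).LAD) ∧ (∀ w, (P.wp w).LAD)

/-- The profile obtained from `P` by replacing firm `f`'s preference by `p`. -/
def Profile.updateFirm (P : Profile F W) (f : F) (p : Pref W) : Profile F W :=
  ⟨Function.update P.fp f p, P.wp⟩

/-- The profile obtained from `P` by replacing worker `w`'s preference by `p`. -/
def Profile.updateWorker (P : Profile F W) (w : W) (p : Pref F) : Profile F W :=
  ⟨P.fp, Function.update P.wp w p⟩

/-- Individual rationality: every agent chooses its whole assignment. -/
def IndRational (P : Profile F W) (μ : Matching F W) : Prop :=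
  (∀ f, (P.fp f).Ch (μ.fm f) = μ.fm f) ∧ (∀ w, (P.wp w).Ch (μ.wm w) = μ.wm w)

/-- The pair `(w, f)` blocks the matching `μ`. -/
def Blocks (P : Profile F W) (μ : Matching F W) (w : W) (f : F) : Prop :=
  w ∉ μ.fm f ∧ w ∈ (P.fp f).Ch (insert w (μ.fm f)) ∧ f ∈ (P.wp w).Ch (insert f (μ.wm w))

/-- (Pairwise) stability. -/
def Stable (P : Profile F W) (μ : Matching F W) : Prop :=
  IndRational P μ ∧ ∀ w f, ¬ Blocks P μ w f

/-- `μF` is the firm-optimal stable matching for `P`. -/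
def FirmOptimal (P : Profile F W) (μF : Matching F W) : Prop :=
  Stable P μF ∧ ∀ μ, Stable P μ → ∀ f, μF.fm f = μ.fm f ∨ (P.fp f).gt (μF.fm f) (μ.fm f)

/-- `μW` is the worker-optimal stable matching for `P`. -/
def WorkerOptimal (P : Profile F W) (μW : Matching F W) : Prop :=
  Stable P μW ∧ ∀ μ, Stable P μ → ∀ w, μW.wm w = μ.wm w ∨ (P.wp w).gt (μW.wm w) (μ.wm w)

/-- Firm `f` satisfies the manipulability property (w.r.t. the rule `h`, the true
profile `P` and the firm-optimal stable matching `μF`): if `h(≻)(f) ≠ μF(≻)(f)`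
then some report `≻'_f` (in the domain: substitutable and LAD) gives `f` a
strictly `≻_f`-better assignment. -/
def FirmManip (h : Profile F W → Matching F W) (P : Profile F W)
    (μF : Matching F W) (f : F) : Prop :=
  (h P).fm f ≠ μF.fm f → ∃ p' : Pref W, p'.Substitutable ∧ p'.LAD ∧
    (P.fp f).gt ((h (P.updateFirm f p')).fm f) ((h P).fm f)

/-- Firm `f` satisfies the manipulability property with Blair order. -/
def FirmManipB (h : Profile F W → Matching F W) (P : Profile F W)
    (μF : Matching F W) (f : F) : Prop :=
  (h P).fm f ≠ μF.fm f → ∃ p' : Pref W, p'.Substitutable ∧ p'.LAD ∧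
    ((P.fp f).Ch ((h (P.updateFirm f p')).fm f ∪ (h P).fm f) = (h (P.updateFirm f p')).fm f ∧
      (h (P.updateFirm f p')).fm f ≠ (h P).fm f)

/-- Worker `w` satisfies the manipulability property. -/
def WorkerManip (h : Profile F W → Matching F W) (P : Profile F W)
    (μW : Matching F W) (w : W) : Prop :=
  (h P).wm w ≠ μW.wm w → ∃ p' : Pref F, p'.Substitutable ∧ p'.LAD ∧
    (P.wp w).gt ((h (P.updateWorker w p')).wm w) ((h P).wm w)

/-- Worker `w` satisfies the manipulability property with Blair order. -/
def WorkerManipB (h : Profile F W → Matching F W) (P : Profile F W)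
    (μW : Matching F W) (w : W) : Prop :=
  (h P).wm w ≠ μW.wm w → ∃ p' : Pref F, p'.Substitutable ∧ p'.LAD ∧
    ((P.wp w).Ch ((h (P.updateWorker w p')).wm w ∪ (h P).wm w) = (h (P.updateWorker w p')).wm w ∧
      (h (P.updateWorker w p')).wm w ≠ (h P).wm w)

/-! ### Auxiliary development: choice-function API, restrictions, and a
Hatfield–Milgrom style fixed-point theory of stable matchings. -/

namespace Pref

variable {α : Type*} [DecidableEq α] [Fintype α]

theorem ch_spec (p : Pref α) (S : Finset α) :
    p.Ch S ⊆ S ∧ ∀ T ⊆ S, T = p.Ch S ∨ p.gt (p.Ch S) T := by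
  classical
  haveI := p.isSTO
  haveI : IsStrictTotalOrder (Finset α) (Function.swap p.gt) := IsStrictTotalOrder.swap _
  unfold Ch
  constructor
  · have := @Finset.max'_mem _ (linearOrderOfSTO (Function.swap p.gt)) S.powerset
      ⟨∅, Finset.empty_mem_powerset S⟩
    simpa [Finset.mem_powerset] using this
  · intro T hT
    exact @Finset.le_max' _ (linearOrderOfSTO (Function.swap p.gt)) S.powerset T
      (Finset.mem_powerset.2 hT)

theorem gt_asymm (p : Pref α) {S T : Finset α} (h : p.gt S T) : ¬ p.gt T S :=
  have := p.isSTO; asymm h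

theorem gt_irrefl (p : Pref α) {S : Finset α} (h : p.gt S S) : False :=
  have := p.isSTO; (irrefl S h)

theorem ch_subset (p : Pref α) (S : Finset α) : p.Ch S ⊆ S := (p.ch_spec S).1

theorem ch_gt (p : Pref α) {S T : Finset α} (hT : T ⊆ S) (hne : T ≠ p.Ch S) :
    p.gt (p.Ch S) T := ((p.ch_spec S).2 T hT).resolve_left hne

theorem ch_unique (p : Pref α) {S U : Finset α} (hU : U ⊆ S)
    (h : ∀ T ⊆ S, T ≠ U → p.gt U T) : U = p.Ch S := by
  by_contra hne
  exact p.gt_asymm (p.ch_gt hU hne) (h _ (p.ch_subset S) (Ne.symm hne))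

theorem ch_idem (p : Pref α) (S : Finset α) : p.Ch (p.Ch S) = p.Ch S := by
  refine (p.ch_unique (subset_refl _) ?_).symm
  intro T hT hne
  exact p.ch_gt (hT.trans (p.ch_subset S)) hne

theorem ch_iia (p : Pref α) {S T : Finset α} (h1 : p.Ch S ⊆ T) (h2 : T ⊆ S) :
    p.Ch T = p.Ch S := by
  refine (p.ch_unique h1 ?_).symm
  intro R hR hne
  exact p.ch_gt (hR.trans h2) hne

/-- Iterated substitutability: membership in the choice survives shrinking the menu. -/
theorem subst_mem (p : Pref α) (hp : p.Substitutable) :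
    ∀ (S T : Finset α) (w : α), T ⊆ S → w ∈ T → w ∈ p.Ch S → w ∈ p.Ch T := by
  intro S
  induction S using Finset.strongInduction with
  | _ S ih =>
    intro T w hTS hwT hwch
    rcases eq_or_ssubset_of_subset hTS with rfl | hss
    · exact hwch
    · obtain ⟨w', hw'S, hw'T⟩ := Finset.exists_of_ssubset hss
      have hne : w ≠ w' := fun h => hw'T (h ▸ hwT)
      have hwS : w ∈ S := hTS hwT
      have h2 : w ∈ p.Ch (S.erase w') := hp S w w' hwS hw'S hne hwch
      exact ih (S.erase w') (Finset.erase_ssubset hw'S) T w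
        (fun x hx => Finset.mem_erase.2 ⟨fun h => hw'T (h ▸ hx), hTS hx⟩) hwT h2

end Pref

namespace Pref

variable {α : Type*} [DecidableEq α] [Fintype α]

/-- The restriction of `p` to `T`: subsets of `T` are ordered as in `p`, and any
set not contained in `T` is ranked below all subsets of `T` (ordered among
themselves by `p`). -/
def restrict (p : Pref α) (T : Finset α) : Pref α where
  gt S S' := (S ⊆ T ∧ ¬ S' ⊆ T) ∨ ((S ⊆ T ↔ S' ⊆ T) ∧ p.gt S S')
  isSTO := by
    have hsto := p.isSTO
    refine { trichotomous := ?_, irrefl := ?_, trans := ?_ }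
    · -- trichotomous
      intro a b
      refine (fun H hab hba => (H.resolve_left hab).resolve_right hba)
        (?_ : ((a ⊆ T ∧ ¬ b ⊆ T) ∨ ((a ⊆ T ↔ b ⊆ T) ∧ p.gt a b)) ∨ a = b ∨
          ((b ⊆ T ∧ ¬ a ⊆ T) ∨ ((b ⊆ T ↔ a ⊆ T) ∧ p.gt b a)))
      rcases trichotomous_of p.gt a b with h | h | h
      · by_cases ha : a ⊆ T <;> by_cases hb : b ⊆ T
        · exact Or.inl (Or.inr ⟨by tauto, h⟩)
        · exact Or.inl (Or.inl ⟨ha, hb⟩)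
        · exact Or.inr (Or.inr (Or.inl ⟨hb, ha⟩))
        · exact Or.inl (Or.inr ⟨by tauto, h⟩)
      · exact Or.inr (Or.inl h)
      · by_cases ha : a ⊆ T <;> by_cases hb : b ⊆ T
        · exact Or.inr (Or.inr (Or.inr ⟨by tauto, h⟩))
        · exact Or.inl (Or.inl ⟨ha, hb⟩)
        · exact Or.inr (Or.inr (Or.inl ⟨hb, ha⟩))
        · exact Or.inr (Or.inr (Or.inr ⟨by tauto, h⟩))
    · -- irrefl
      intro a h
      rcases h with ⟨h1, h2⟩ | ⟨_, h⟩
      · exact h2 h1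
      · exact p.gt_irrefl h
    · -- trans
      intro a b c hab hbc
      rcases hab with ⟨ha, hb⟩ | ⟨hiff1, h1⟩ <;> rcases hbc with ⟨hb', hc⟩ | ⟨hiff2, h2⟩
      · exact absurd hb' hb
      · exact Or.inl ⟨ha, fun hc => hb (hiff2.2 hc)⟩
      · exact Or.inl ⟨hiff1.2 hb', hc⟩
      · exact Or.inr ⟨hiff1.trans hiff2, trans_of p.gt h1 h2⟩

theorem restrict_ch (p : Pref α) (T S : Finset α) :
    (p.restrict T).Ch S = p.Ch (S ∩ T) := by
  refine ((p.restrict T).ch_unique ?_ ?_).symm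
  · exact (p.ch_subset _).trans Finset.inter_subset_left
  · intro R hR hne
    have hchT : p.Ch (S ∩ T) ⊆ T := (p.ch_subset _).trans Finset.inter_subset_right
    by_cases hRT : R ⊆ T
    · refine Or.inr ⟨by tauto, ?_⟩
      exact p.ch_gt (Finset.subset_inter hR hRT) hne
    · exact Or.inl ⟨hchT, hRT⟩

theorem restrict_substitutable (p : Pref α) (T : Finset α) (hp : p.Substitutable) :
    (p.restrict T).Substitutable := by
  intro S w w' hwS hw'S hne hch
  rw [restrict_ch] at hch ⊢
  rw [Finset.erase_inter]
  by_cases hw' : w' ∈ S ∩ T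
  · exact hp (S ∩ T) w w' (p.ch_subset _ hch) hw' hne hch
  · rwa [Finset.erase_eq_of_notMem hw']

theorem restrict_lad (p : Pref α) (T : Finset α) (hp : p.LAD) :
    (p.restrict T).LAD := by
  intro Y X hYX
  rw [restrict_ch, restrict_ch]
  exact hp _ _ (Finset.inter_subset_inter_right hYX)

end Pref

/-! ### The Hatfield–Milgrom style fixed-point development -/

open Finset

section HM

variable {F W : Type*} [DecidableEq F] [Fintype F] [DecidableEq W] [Fintype W]

/-- Firms' opportunity map. -/
noncomputable def PhiF (P : Profile F W) (E : W → Finset F) : F → Finset W := fun f =>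
  Finset.univ.filter (fun w => f ∉ E w ∨ f ∈ (P.wp w).Ch (E w))

/-- Workers' opportunity map. -/
noncomputable def PhiW (P : Profile F W) (D : F → Finset W) : W → Finset F := fun w =>
  Finset.univ.filter (fun f => w ∉ D f ∨ w ∈ (P.fp f).Ch (D f))

noncomputable def stepHM (P : Profile F W) (s : (F → Finset W) × (W → Finset F)) :
    (F → Finset W) × (W → Finset F) := (PhiF P s.2, PhiW P s.1)

/-- `DomS s t` : the state `s` dominates (is more favorable for firms than) `t`. -/
def DomS (s t : (F → Finset W) × (W → Finset F)) : Prop :=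
  (∀ f, t.1 f ⊆ s.1 f) ∧ (∀ w, s.2 w ⊆ t.2 w)

theorem mem_PhiF {P : Profile F W} {E : W → Finset F} {f : F} {w : W} :
    w ∈ PhiF P E f ↔ (f ∉ E w ∨ f ∈ (P.wp w).Ch (E w)) := by
  simp [PhiF]

theorem mem_PhiW {P : Profile F W} {D : F → Finset W} {f : F} {w : W} :
    f ∈ PhiW P D w ↔ (w ∉ D f ∨ w ∈ (P.fp f).Ch (D f)) := by
  simp [PhiW]

theorem PhiF_anti {P : Profile F W} (hs : P.Substitutable) {E E' : W → Finset F}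
    (hEE : ∀ w, E w ⊆ E' w) : ∀ f, PhiF P E' f ⊆ PhiF P E f := by
  intro f w hw
  rw [mem_PhiF] at hw ⊢
  rcases hw with hw | hw
  · exact Or.inl (fun hf => hw (hEE w hf))
  · by_cases hf : f ∈ E w
    · exact Or.inr ((P.wp w).subst_mem (hs.2 w) (E' w) (E w) f (hEE w) hf hw)
    · exact Or.inl hf

theorem PhiW_anti {P : Profile F W} (hs : P.Substitutable) {D D' : F → Finset W}
    (hDD : ∀ f, D f ⊆ D' f) : ∀ w, PhiW P D' w ⊆ PhiW P D w := by
  intro w f hf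
  rw [mem_PhiW] at hf ⊢
  rcases hf with hf | hf
  · exact Or.inl (fun hw => hf (hDD f hw))
  · by_cases hw : w ∈ D f
    · exact Or.inr ((P.fp f).subst_mem (hs.1 f) (D' f) (D f) w (hDD f) hw hf)
    · exact Or.inl hw

theorem stepHM_mono {P : Profile F W} (hs : P.Substitutable)
    {s t : (F → Finset W) × (W → Finset F)} (h : DomS s t) :
    DomS (stepHM P s) (stepHM P t) := by
  exact ⟨PhiF_anti hs h.2, PhiW_anti hs h.1⟩

/-- One tedious step: a strictly dominated state has strictly smaller measure. -/
def measHM (s : (F → Finset W) × (W → Finset F)) : ℕ :=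
  (∑ f, (s.1 f).card) + ∑ w, (Fintype.card F - (s.2 w).card)

theorem measHM_lt {s t : (F → Finset W) × (W → Finset F)} (h : DomS s t) (hne : t ≠ s) :
    measHM t < measHM s := by
  have h1 : ∀ f, (t.1 f).card ≤ (s.1 f).card := fun f => Finset.card_le_card (h.1 f)
  have h2 : ∀ w, (Fintype.card F - (t.2 w).card) ≤ (Fintype.card F - (s.2 w).card) :=
    fun w => Nat.sub_le_sub_left (Finset.card_le_card (h.2 w)) _
  have hcases : (∃ f, t.1 f ≠ s.1 f) ∨ (∃ w, t.2 w ≠ s.2 w) := by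
    by_contra hcon
    push_neg at hcon
    exact hne (Prod.ext (funext hcon.1) (funext hcon.2))
  have hsum1 : (∑ f, (t.1 f).card) ≤ ∑ f, (s.1 f).card :=
    Finset.sum_le_sum (fun f _ => h1 f)
  have hsum2 : (∑ w, (Fintype.card F - (t.2 w).card)) ≤
      ∑ w, (Fintype.card F - (s.2 w).card) := Finset.sum_le_sum (fun w _ => h2 w)
  rcases hcases with ⟨f, hf⟩ | ⟨w, hw⟩
  · have : (t.1 f).card < (s.1 f).card :=
      Finset.card_lt_card (lt_of_le_of_ne (h.1 f) hf)
    have : (∑ f, (t.1 f).card) < ∑ f, (s.1 f).card :=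
      Finset.sum_lt_sum (fun f _ => h1 f) ⟨f, Finset.mem_univ f, this⟩
    exact Nat.add_lt_add_of_lt_of_le this hsum2
  · have hlt : (s.2 w).card < (t.2 w).card :=
      Finset.card_lt_card (lt_of_le_of_ne (h.2 w) (Ne.symm hw))
    have hwcard : (t.2 w).card ≤ Fintype.card F := by
      simpa using Finset.card_le_card ((t.2 w).subset_univ)
    have : (Fintype.card F - (t.2 w).card) < (Fintype.card F - (s.2 w).card) :=
      Nat.sub_lt_sub_left (lt_of_lt_of_le hlt hwcard) hlt
    have : (∑ w, (Fintype.card F - (t.2 w).card)) <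
        ∑ w, (Fintype.card F - (s.2 w).card) :=
      Finset.sum_lt_sum (fun w _ => h2 w) ⟨w, Finset.mem_univ w, this⟩
    exact Nat.add_lt_add_of_le_of_lt hsum1 this

/-- The top state. -/
def topHM : (F → Finset W) × (W → Finset F) := (fun _ => Finset.univ, fun _ => ∅)

theorem exists_fixHM (P : Profile F W) (hs : P.Substitutable) :
    ∃ s, stepHM P s = s ∧ ∀ t, stepHM P t = t → DomS s t := by
  classical
  set x : ℕ → (F → Finset W) × (W → Finset F) := fun n => (stepHM P)^[n] topHM with hx
  have hx0 : x 0 = topHM := rfl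
  have hxs : ∀ n, x (n+1) = stepHM P (x n) := by
    intro n; rw [hx]; simp [Function.iterate_succ_apply']
  have hdom_top : ∀ t : (F → Finset W) × (W → Finset F), DomS topHM t := by
    intro t
    exact ⟨fun f => Finset.subset_univ _, fun w => Finset.empty_subset _⟩
  have hchain : ∀ n, DomS (x n) (x (n+1)) := by
    intro n
    induction n with
    | zero => rw [hxs 0, hx0]; exact hdom_top _
    | succ n ihn =>
      have h2 := stepHM_mono hs ihn
      rwa [← hxs n, ← hxs (n+1)] at h2
  have hdomfix : ∀ t, stepHM P t = t → ∀ n, DomS (x n) t := by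
    intro t ht n
    induction n with
    | zero => rw [hx0]; exact hdom_top t
    | succ n ihn =>
      have h2 := stepHM_mono hs ihn
      rwa [← hxs n, ht] at h2
  -- find a fixed point along the chain
  have hfix : ∃ n, x (n+1) = x n := by
    by_contra hcon
    push_neg at hcon
    have hdec : ∀ n, measHM (x (n+1)) < measHM (x n) := fun n =>
      measHM_lt (hchain n) (hcon n)
    have hle : ∀ n, measHM (x n) + n ≤ measHM (x 0) := by
      intro n
      induction n with
      | zero => simp
      | succ n ihn => have := hdec n; omega
    exact absurd (hle (measHM (x 0) + 1)) (by omega)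
  obtain ⟨n, hn⟩ := hfix
  exact ⟨x n, by rw [← hxs n]; exact hn, fun t ht => hdomfix t ht n⟩

end HM

section HM2

variable {F W : Type*} [DecidableEq F] [Fintype F] [DecidableEq W] [Fintype W]

/-- At a fixed point, firms' and workers' choices agree. -/
theorem fix_compat {P : Profile F W} {s : (F → Finset W) × (W → Finset F)}
    (hfix : stepHM P s = s) (f : F) (w : W) :
    w ∈ (P.fp f).Ch (s.1 f) ↔ f ∈ (P.wp w).Ch (s.2 w) := by
  have hD : ∀ f w, w ∈ s.1 f ↔ (f ∉ s.2 w ∨ f ∈ (P.wp w).Ch (s.2 w)) := by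
    intro f w
    conv_lhs => rw [← congrFun (congrArg Prod.fst hfix) f]
    exact mem_PhiF
  have hE : ∀ f w, f ∈ s.2 w ↔ (w ∉ s.1 f ∨ w ∈ (P.fp f).Ch (s.1 f)) := by
    intro f w
    conv_lhs => rw [← congrFun (congrArg Prod.snd hfix) w]
    exact mem_PhiW
  constructor
  · intro h
    have hwD : w ∈ s.1 f := (P.fp f).ch_subset _ h
    have hfE : f ∈ s.2 w := (hE f w).2 (Or.inr h)
    rcases (hD f w).1 hwD with h' | h'
    · exact absurd hfE h'
    · exact h'
  · intro h
    have hfE : f ∈ s.2 w := (P.wp w).ch_subset _ h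
    have hwD : w ∈ s.1 f := (hD f w).2 (Or.inr h)
    rcases (hE f w).1 hfE with h' | h'
    · exact absurd hwD h'
    · exact h'

/-- The stable matching induced by a fixed point. -/
noncomputable def fixMatching (P : Profile F W) (s : (F → Finset W) × (W → Finset F))
    (hfix : stepHM P s = s) : Matching F W :=
  ⟨fun f => (P.fp f).Ch (s.1 f), fun w => (P.wp w).Ch (s.2 w),
    fun f w => fix_compat hfix f w⟩

theorem fixMatching_stable {P : Profile F W} {s : (F → Finset W) × (W → Finset F)}
    (hfix : stepHM P s = s) : Stable P (fixMatching P s hfix) := by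
  have hD : ∀ f w, w ∈ s.1 f ↔ (f ∉ s.2 w ∨ f ∈ (P.wp w).Ch (s.2 w)) := by
    intro f w
    conv_lhs => rw [← congrFun (congrArg Prod.fst hfix) f]
    exact mem_PhiF
  constructor
  · constructor
    · intro f; exact (P.fp f).ch_idem _
    · intro w; exact (P.wp w).ch_idem _
  · rintro w f ⟨hnm, hbf, hbw⟩
    by_cases hwD : w ∈ s.1 f
    · -- the firm's choice from `s.1 f` would already have included `w`
      have hiia : (P.fp f).Ch (insert w ((P.fp f).Ch (s.1 f))) = (P.fp f).Ch (s.1 f) :=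
        (P.fp f).ch_iia (Finset.subset_insert _ _)
          (Finset.insert_subset hwD ((P.fp f).ch_subset _))
      rw [show (fixMatching P s hfix).fm f = (P.fp f).Ch (s.1 f) from rfl] at hbf hnm
      rw [hiia] at hbf
      exact hnm hbf
    · -- then `f ∈ s.2 w` but `f` is not chosen by `w`
      have := (hD f w).not.1 hwD
      push_neg at this
      obtain ⟨hfE, hfnch⟩ := this
      have hiia : (P.wp w).Ch (insert f ((P.wp w).Ch (s.2 w))) = (P.wp w).Ch (s.2 w) :=
        (P.wp w).ch_iia (Finset.subset_insert _ _)
          (Finset.insert_subset hfE ((P.wp w).ch_subset _))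
      rw [show (fixMatching P s hfix).wm w = (P.wp w).Ch (s.2 w) from rfl] at hbw
      rw [hiia] at hbw
      exact hfnch hbw

/-- The canonical fixed point attached to a stable matching. -/
noncomputable def stateOf (P : Profile F W) (μ : Matching F W) :
    (F → Finset W) × (W → Finset F) :=
  (fun f => Finset.univ.filter (fun w => f ∈ (P.wp w).Ch (insert f (μ.wm w))),
   fun w => Finset.univ.filter
     (fun f => f ∈ μ.wm w ∨ f ∉ (P.wp w).Ch (insert f (μ.wm w))))

theorem mem_stateOf_fst {P : Profile F W} {μ : Matching F W} {f : F} {w : W} :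
    w ∈ (stateOf P μ).1 f ↔ f ∈ (P.wp w).Ch (insert f (μ.wm w)) := by
  simp [stateOf]

theorem mem_stateOf_snd {P : Profile F W} {μ : Matching F W} {f : F} {w : W} :
    f ∈ (stateOf P μ).2 w ↔ (f ∈ μ.wm w ∨ f ∉ (P.wp w).Ch (insert f (μ.wm w))) := by
  simp [stateOf]

theorem fm_subset_stateOf {P : Profile F W} {μ : Matching F W}
    (hIR : IndRational P μ) (f : F) : μ.fm f ⊆ (stateOf P μ).1 f := by
  intro w hw
  rw [mem_stateOf_fst]
  have hf : f ∈ μ.wm w := (μ.compat f w).1 hw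
  rw [Finset.insert_eq_self.2 hf, hIR.2 w]
  exact hf

/-- Choice from the firm's opportunity set recovers the matching (uses stability). -/
theorem ch_stateOf_fst {P : Profile F W} (hs : P.Substitutable) {μ : Matching F W}
    (hst : Stable P μ) (f : F) :
    (P.fp f).Ch ((stateOf P μ).1 f) = μ.fm f := by
  have hDsub := fm_subset_stateOf hst.1 f
  have hsub : (P.fp f).Ch ((stateOf P μ).1 f) ⊆ μ.fm f := by
    intro w hw
    by_contra hnm
    have hwD : w ∈ (stateOf P μ).1 f := (P.fp f).ch_subset _ hw
    have h1 : w ∈ (P.fp f).Ch (insert w (μ.fm f)) :=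
      (P.fp f).subst_mem (hs.1 f) _ _ w
        (Finset.insert_subset hwD hDsub) (Finset.mem_insert_self w _) hw
    have h2 : f ∈ (P.wp w).Ch (insert f (μ.wm w)) := mem_stateOf_fst.1 hwD
    exact hst.2 w f ⟨hnm, h1, h2⟩
  have := (P.fp f).ch_iia hsub hDsub
  rw [hst.1.1 f] at this
  rw [← this]

/-- Choice from the worker's extended set recovers the matching (only needs
substitutability and individual rationality). -/
theorem ch_stateOf_snd {P : Profile F W} (hs : P.Substitutable) {μ : Matching F W}
    (hIR : IndRational P μ) (w : W) :
    (P.wp w).Ch ((stateOf P μ).2 w) = μ.wm w := by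
  have hEsub : μ.wm w ⊆ (stateOf P μ).2 w := by
    intro g hg; rw [mem_stateOf_snd]; exact Or.inl hg
  have hsub : (P.wp w).Ch ((stateOf P μ).2 w) ⊆ μ.wm w := by
    intro g hg
    by_contra hnm
    have hgE : g ∈ (stateOf P μ).2 w := (P.wp w).ch_subset _ hg
    have hrej : g ∉ (P.wp w).Ch (insert g (μ.wm w)) :=
      (mem_stateOf_snd.1 hgE).resolve_left hnm
    exact hrej ((P.wp w).subst_mem (hs.2 w) _ _ g
      (Finset.insert_subset hgE hEsub) (Finset.mem_insert_self g _) hg)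
  have := (P.wp w).ch_iia hsub hEsub
  rw [hIR.2 w] at this
  rw [← this]

theorem stateOf_fix {P : Profile F W} (hs : P.Substitutable) {μ : Matching F W}
    (hst : Stable P μ) : stepHM P (stateOf P μ) = stateOf P μ := by
  have hir : ∀ f w, f ∈ μ.wm w → f ∈ (P.wp w).Ch (insert f (μ.wm w)) := by
    intro f w hf
    rw [Finset.insert_eq_self.2 hf, hst.1.2 w]
    exact hf
  refine Prod.ext (funext fun f => Finset.ext fun w => ?_) (funext fun w => Finset.ext fun f => ?_)
  · -- PhiF P (stateOf P μ).2 f = (stateOf P μ).1 f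
    rw [show (stepHM P (stateOf P μ)).1 = PhiF P (stateOf P μ).2 from rfl]
    rw [mem_PhiF, mem_stateOf_fst, ch_stateOf_snd hs hst.1 w]
    constructor
    · rintro (h | h)
      · rw [mem_stateOf_snd] at h
        push_neg at h
        exact h.2
      · exact hir f w h
    · intro h
      by_cases hm : f ∈ μ.wm w
      · exact Or.inr hm
      · refine Or.inl ?_
        rw [mem_stateOf_snd]
        push_neg
        exact ⟨hm, h⟩
  · rw [show (stepHM P (stateOf P μ)).2 = PhiW P (stateOf P μ).1 from rfl]
    rw [mem_PhiW, ch_stateOf_fst hs hst f, mem_stateOf_snd, mem_stateOf_fst]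
    rw [μ.compat f w]
    tauto

end HM2

section HM3

variable {F W : Type*} [DecidableEq F] [Fintype F] [DecidableEq W] [Fintype W]

theorem sum_cards (μ : Matching F W) :
    (∑ f, (μ.fm f).card) = ∑ w, (μ.wm w).card := by
  classical
  have h1 : ∀ f : F, (μ.fm f).card = ∑ w, (if w ∈ μ.fm f then 1 else 0) := by
    intro f
    rw [Finset.sum_ite_mem]
    simp [Finset.univ_inter]
  have h2 : ∀ w : W, (μ.wm w).card = ∑ f, (if f ∈ μ.wm w then 1 else 0) := by
    intro w
    rw [Finset.sum_ite_mem]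
    simp [Finset.univ_inter]
  simp only [h1, h2]
  rw [Finset.sum_comm]
  congr 1
  funext w
  congr 1
  funext f
  congr 1
  simp [μ.compat f w]

/-- The firm-side dominant stable matching: Blair-dominance and the rural
hospitals cardinality equalities. -/
theorem exists_optimal (P : Profile F W) (hs : P.Substitutable) (hl : P.LAD) :
    ∃ ρ : Matching F W, Stable P ρ ∧ ∀ μ, Stable P μ →
      (∀ f, (P.fp f).Ch (ρ.fm f ∪ μ.fm f) = ρ.fm f) ∧
      (∀ f, (μ.fm f).card = (ρ.fm f).card) ∧
      (∀ w, (μ.wm w).card = (ρ.wm w).card) := by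
  classical
  obtain ⟨s, hfix, hdom⟩ := exists_fixHM P hs
  refine ⟨fixMatching P s hfix, fixMatching_stable hfix, ?_⟩
  intro μ hst
  have hμfix := stateOf_fix hs hst
  have hd := hdom _ hμfix
  have hfm : ∀ f, (fixMatching P s hfix).fm f = (P.fp f).Ch (s.1 f) := fun _ => rfl
  have hwm : ∀ w, (fixMatching P s hfix).wm w = (P.wp w).Ch (s.2 w) := fun _ => rfl
  -- Blair dominance
  have hblair : ∀ f, (P.fp f).Ch ((fixMatching P s hfix).fm f ∪ μ.fm f)
      = (fixMatching P s hfix).fm f := by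
    intro f
    rw [hfm]
    refine (P.fp f).ch_iia ?_ ?_
    · exact Finset.subset_union_left
    · refine Finset.union_subset ((P.fp f).ch_subset _) ?_
      exact (fm_subset_stateOf hst.1 f).trans (hd.1 f)
  -- cardinality comparisons
  have hcf : ∀ f, (μ.fm f).card ≤ ((fixMatching P s hfix).fm f).card := by
    intro f
    rw [hfm, ← ch_stateOf_fst hs hst f]
    exact hl.1 f _ _ (hd.1 f)
  have hcw : ∀ w, ((fixMatching P s hfix).wm w).card ≤ (μ.wm w).card := by
    intro w
    rw [hwm, ← ch_stateOf_snd hs hst.1 w]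
    exact hl.2 w _ _ (hd.2 w)
  have hsum : (∑ f, (μ.fm f).card) = ∑ f, ((fixMatching P s hfix).fm f).card := by
    have e1 := sum_cards μ
    have e2 := sum_cards (fixMatching P s hfix)
    have le1 : (∑ f, (μ.fm f).card) ≤ ∑ f, ((fixMatching P s hfix).fm f).card :=
      Finset.sum_le_sum (fun f _ => hcf f)
    have le2 : (∑ w, ((fixMatching P s hfix).wm w).card) ≤ ∑ w, (μ.wm w).card :=
      Finset.sum_le_sum (fun w _ => hcw w)
    omega
  have hsumw : (∑ w, ((fixMatching P s hfix).wm w).card) = ∑ w, (μ.wm w).card := by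
    have e1 := sum_cards μ
    have e2 := sum_cards (fixMatching P s hfix)
    omega
  refine ⟨hblair, ?_, ?_⟩
  · intro f
    have := (Finset.sum_eq_sum_iff_of_le (fun f _ => hcf f)).1 hsum
    exact this f (Finset.mem_univ f)
  · intro w
    have := (Finset.sum_eq_sum_iff_of_le (fun w _ => hcw w)).1 hsumw
    exact (this w (Finset.mem_univ w)).symm

end HM3

section KeyLemma

variable {F W : Type*} [DecidableEq F] [Fintype F] [DecidableEq W] [Fintype W]

theorem updateFirm_substitutable {P : Profile F W} (hs : P.Substitutable)
    {p : Pref W} (hp : p.Substitutable) (f : F) :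
    (P.updateFirm f p).Substitutable := by
  refine ⟨fun g => ?_, hs.2⟩
  by_cases hg : g = f
  · subst hg; simpa [Profile.updateFirm] using hp
  · simpa [Profile.updateFirm, Function.update_of_ne hg] using hs.1 g

theorem updateFirm_lad {P : Profile F W} (hl : P.LAD)
    {p : Pref W} (hp : p.LAD) (f : F) :
    (P.updateFirm f p).LAD := by
  refine ⟨fun g => ?_, hl.2⟩
  by_cases hg : g = f
  · subst hg; simpa [Profile.updateFirm] using hp
  · simpa [Profile.updateFirm, Function.update_of_ne hg] using hl.1 g

/-- The firm-optimal matching stays stable when firm `f` truncates its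
preference to its own assignment. -/
theorem stable_update_restrict {P : Profile F W} {μF : Matching F W}
    (hst : Stable P μF) (f : F) :
    Stable (P.updateFirm f ((P.fp f).restrict (μF.fm f))) μF := by
  set Q := P.updateFirm f ((P.fp f).restrict (μF.fm f)) with hQ
  have hQf : Q.fp f = (P.fp f).restrict (μF.fm f) := by
    simp [hQ, Profile.updateFirm]
  have hQg : ∀ g, g ≠ f → Q.fp g = P.fp g := by
    intro g hg; simp [hQ, Profile.updateFirm, Function.update_of_ne hg]
  have hQw : Q.wp = P.wp := rfl
  constructor
  · constructor
    · intro g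
      by_cases hg : g = f
      · subst hg
        rw [hQf, Pref.restrict_ch, Finset.inter_self]
        exact hst.1.1 _
      · rw [hQg g hg]; exact hst.1.1 g
    · intro w; rw [hQw]; exact hst.1.2 w
  · rintro w g ⟨hnm, hbf, hbw⟩
    by_cases hg : g = f
    · subst hg
      rw [hQf, Pref.restrict_ch, Finset.insert_inter_of_notMem hnm,
        Finset.inter_self] at hbf
      rw [hst.1.1 _] at hbf
      exact hnm hbf
    · rw [hQg g hg] at hbf
      rw [hQw] at hbw
      exact hst.2 w g ⟨hnm, hbf, hbw⟩

/-- Key lemma: a firm not receiving its optimal assignment can manipulate to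
obtain a Blair-better (hence also preference-better) outcome. -/
theorem key_firm (P : Profile F W) (hsub : P.Substitutable) (hlad : P.LAD)
    (h : Profile F W → Matching F W)
    (hrule : ∀ P' : Profile F W, P'.Substitutable → P'.LAD → Stable P' (h P'))
    (μF : Matching F W) (hF : FirmOptimal P μF) (f : F)
    (hne : (h P).fm f ≠ μF.fm f) :
    ∃ p' : Pref W, p'.Substitutable ∧ p'.LAD ∧
      ((P.fp f).Ch ((h (P.updateFirm f p')).fm f ∪ (h P).fm f)
          = (h (P.updateFirm f p')).fm f ∧
        (h (P.updateFirm f p')).fm f ≠ (h P).fm f) ∧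
      (P.fp f).gt ((h (P.updateFirm f p')).fm f) ((h P).fm f) := by
  classical
  set M := μF.fm f with hM
  set p' := (P.fp f).restrict M with hp'
  set Q := P.updateFirm f p' with hQdef
  have hp's : p'.Substitutable := Pref.restrict_substitutable _ _ (hsub.1 f)
  have hp'l : p'.LAD := Pref.restrict_lad _ _ (hlad.1 f)
  have hQs : Q.Substitutable := updateFirm_substitutable hsub hp's f
  have hQl : Q.LAD := updateFirm_lad hlad hp'l f
  have hQf : Q.fp f = p' := by simp [hQdef, Profile.updateFirm]
  -- the two stable matchings of the market Q
  have hμFQ : Stable Q μF := stable_update_restrict hF.1 f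
  have hhQ : Stable Q (h Q) := hrule Q hQs hQl
  -- the assignment of f under h Q is contained in M
  have hCsub : (h Q).fm f ⊆ M := by
    have hIR := hhQ.1.1 f
    rw [hQf, hp', Pref.restrict_ch] at hIR
    rw [← hIR]
    exact ((P.fp f).ch_subset _).trans Finset.inter_subset_right
  -- rural hospitals at Q : the cardinality is |M|
  obtain ⟨ρ, hρst, hρ⟩ := exists_optimal Q hQs hQl
  have hc1 := (hρ _ hhQ).2.1 f
  have hc2 := (hρ _ hμFQ).2.1 f
  have hCM : (h Q).fm f = M := by
    refine Finset.eq_of_subset_of_card_le hCsub ?_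
    rw [hM] at *
    omega
  -- the dominant stable matching at P has f-assignment M
  obtain ⟨ρ', hρ'st, hρ'⟩ := exists_optimal P hsub hlad
  have hblairF := (hρ' _ hF.1).1 f
  have hρ'M : ρ'.fm f = M := by
    by_contra hneq
    have hMsub : M ⊆ ρ'.fm f ∪ μF.fm f := Finset.subset_union_right
    have hgt : (P.fp f).gt (ρ'.fm f) M := by
      have := (P.fp f).ch_gt hMsub (by rw [hblairF]; exact fun hc => hneq hc.symm)
      rwa [hblairF] at this
    rcases hF.2 ρ' hρ'st f with heq | hgt'
    · exact hneq (by rw [← heq])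
    · exact (P.fp f).gt_asymm hgt hgt'
  have hblairB := (hρ' _ (hrule P hsub hlad)).1 f
  rw [hρ'M] at hblairB
  -- conclude
  refine ⟨p', hp's, hp'l, ⟨?_, ?_⟩, ?_⟩
  · rw [hCM]; exact hblairB
  · rw [hCM]; exact fun hc => hne hc.symm
  · rw [hCM]
    refine ?_
    have hBsub : (h P).fm f ⊆ M ∪ (h P).fm f := Finset.subset_union_right
    have := (P.fp f).ch_gt hBsub (by rw [hblairB]; exact hne)
    rwa [hblairB] at this

end KeyLemma


section Flip

variable {F W : Type*} [DecidableEq F] [Fintype F] [DecidableEq W] [Fintype W]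

def Matching.flip (μ : Matching F W) : Matching W F :=
  ⟨μ.wm, μ.fm, fun w f => (μ.compat f w).symm⟩

def Profile.flip (P : Profile F W) : Profile W F := ⟨P.wp, P.fp⟩

@[simp] theorem Matching.flip_flip (μ : Matching F W) : μ.flip.flip = μ := rfl

@[simp] theorem Profile.flip_flip (P : Profile F W) : P.flip.flip = P := rfl

theorem Profile.flip_substitutable {P : Profile F W} (hs : P.Substitutable) :
    P.flip.Substitutable := ⟨hs.2, hs.1⟩

theorem Profile.flip_lad {P : Profile F W} (hl : P.LAD) : P.flip.LAD := ⟨hl.2, hl.1⟩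

theorem Stable.flip {P : Profile F W} {μ : Matching F W} (hst : Stable P μ) :
    Stable P.flip μ.flip := by
  refine ⟨⟨hst.1.2, hst.1.1⟩, ?_⟩
  rintro f w ⟨hnm, hbf, hbw⟩
  exact hst.2 w f ⟨fun hc => hnm ((μ.compat f w).1 hc), hbw, hbf⟩

theorem WorkerOptimal.flip {P : Profile F W} {μW : Matching F W}
    (hW : WorkerOptimal P μW) : FirmOptimal P.flip μW.flip := by
  refine ⟨hW.1.flip, ?_⟩
  intro μ hμ w
  have := hW.2 μ.flip (by simpa using hμ.flip) w
  exact this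

end Flip

/-- Proposition 3 of the paper.  In the matching game induced by a
stable matching rule `h` on a market with substitutable and LAD preferences, an
agent satisfies the manipulability property with Blair order if and only if it
satisfies the manipulability property. -/
theorem stmt4 {F W : Type*} [DecidableEq F] [Fintype F] [DecidableEq W] [Fintype W]
    (P : Profile F W) (hsub : P.Substitutable) (hlad : P.LAD)
    (h : Profile F W → Matching F W)
    (hrule : ∀ P' : Profile F W, P'.Substitutable → P'.LAD → Stable P' (h P'))
    (μF μW : Matching F W) (hF : FirmOptimal P μF) (hW : WorkerOptimal P μW) :
    (∀ f : F, FirmManipB h P μF f ↔ FirmManip h P μF f) ∧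
    (∀ w : W, WorkerManipB h P μW w ↔ WorkerManip h P μW w) := by
  constructor
  · intro f
    constructor
    · intro _ hne
      obtain ⟨p', h1, h2, _, h4⟩ := key_firm P hsub hlad h hrule μF hF f hne
      exact ⟨p', h1, h2, h4⟩
    · intro _ hne
      obtain ⟨p', h1, h2, h3, _⟩ := key_firm P hsub hlad h hrule μF hF f hne
      exact ⟨p', h1, h2, h3⟩
  · intro w
    have key := key_firm P.flip (Profile.flip_substitutable hsub) (Profile.flip_lad hlad)
      (fun Q => (h Q.flip).flip)
      (fun Q hQs hQl => (hrule Q.flip (Profile.flip_substitutable hQs)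
        (Profile.flip_lad hQl)).flip)
      μW.flip hW.flip w
    constructor
    · intro _ hne
      obtain ⟨p', h1, h2, _, h4⟩ := key hne
      exact ⟨p', h1, h2, h4⟩
    · intro _ hne
      obtain ⟨p', h1, h2, h3, _⟩ := key hne
      exact ⟨p', h1, h2, h3⟩
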